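/- There exists a nonnegative null sequence x in the Marcinkiewicz space m_Ψ with Ψ(n) = log(n+1) such that the sequence ( (Σ_{k=1}^n x*_k)/log(n+1) )ₙ is bounded (indeed by 2) but does not converge: it takes values 1 and ≤ 1/2 infinitely often along a suitable sequence of indices. -/

import Mathlib

open scoped Classical

/-- A Banach sequence space: a subspace of `ℕ → ℝ` with a complete monotone norm
such that the canonical unit vectors have norm one. -/
structure BanachSeqSpace where
  X : Submodule ℝ (ℕ → ℝ)
  N : (ℕ → ℝ) → ℝ
  N_nonneg : ∀ x ∈ X, 0 ≤ N x
  N_eq_zero : ∀ x ∈ X, N x = 0 → x = 0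
  N_add : ∀ x ∈ X, ∀ y ∈ X, N (x + y) ≤ N x + N y
  N_smul : ∀ (c : ℝ), ∀ x ∈ X, N (c • x) = |c| * N x
  complete : ∀ f : ℕ → ℕ → ℝ, (∀ k, f k ∈ X) →
    (∀ ε : ℝ, 0 < ε → ∃ K, ∀ m ≥ K, ∀ n ≥ K, N (f m - f n) < ε) →
    ∃ x ∈ X, ∀ ε : ℝ, 0 < ε → ∃ K, ∀ k ≥ K, N (f k - x) < ε
  mono_mem : ∀ (x : ℕ → ℝ), ∀ y ∈ X, (∀ n, |x n| ≤ |y n|) → x ∈ X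
  mono_norm : ∀ (x : ℕ → ℝ), ∀ y ∈ X, (∀ n, |x n| ≤ |y n|) → N x ≤ N y
  unit_mem : ∀ k : ℕ, (fun n => if n = k then (1 : ℝ) else 0) ∈ X
  unit_norm : ∀ k : ℕ, N (fun n => if n = k then (1 : ℝ) else 0) = 1

/-- A Banach sequence space is symmetric if it is stable under permutations of the
coordinates, with equal norm. -/
def IsSymmetric (S : BanachSeqSpace) : Prop :=
  ∀ x ∈ S.X, ∀ σ : Equiv.Perm ℕ, (x ∘ σ) ∈ S.X ∧ S.N (x ∘ σ) = S.N x

/-- The decreasing rearrangement of a (bounded) sequence, indexed from 0: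
`dstar x n` is the paper's `x*_(n+1) = inf { sup_{k ∉ J} |x k| : |J| ≤ n }`. -/
noncomputable def dstar (x : ℕ → ℝ) (n : ℕ) : ℝ :=
  sInf {a : ℝ | ∃ J : Finset ℕ, J.card ≤ n ∧ a = sSup {b : ℝ | ∃ k, k ∉ J ∧ b = |x k|}}

/-- The closing up of a sequence: its nonzero terms in order, padded with zeros. -/
noncomputable def closingUp (x : ℕ → ℝ) (n : ℕ) : ℝ :=
  if {k | x k ≠ 0}.Infinite ∨ n < {k | x k ≠ 0}.ncard
  then x (Nat.nth (fun k => x k ≠ 0) n) else 0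

/-- slope on the block `[2^(8^j)-1, 2^(8^(j+1))-1)` -/
noncomputable def sl (j : ℕ) : ℝ := 7 * 8^j * Real.log 2 / ((2:ℝ)^(8^(j+1)) - 2^(8^j))

/-- block index of position `k ≥ 1` -/
def blk (k : ℕ) : ℕ := Nat.findGreatest (fun j => 2^(8^j) ≤ k+1) k

noncomputable def xx (k : ℕ) : ℝ := if k = 0 then Real.log 2 else sl (blk k)

noncomputable def SS (n : ℕ) : ℝ :=
  if n = 0 then 0
  else 8^(blk n) * Real.log 2 + ((n:ℝ) + 1 - 2^(8^(blk n))) * sl (blk n)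

lemma log2_pos : (0:ℝ) < Real.log 2 := Real.log_pos (by norm_num)

lemma dpos (j : ℕ) : (0:ℝ) < 2^(8^(j+1)) - 2^(8^j) := by
  have h : (2:ℝ)^(8^j) < 2^(8^(j+1)) :=
    pow_lt_pow_right₀ (by norm_num) (Nat.pow_lt_pow_right (by norm_num) (Nat.lt_succ_self j))
  linarith

lemma sl_pos (j : ℕ) : 0 < sl j := by
  apply div_pos _ (dpos j)
  positivity

lemma sl_nonneg (j : ℕ) : 0 ≤ sl j := (sl_pos j).le

lemma sl_mul (j : ℕ) : ((2:ℝ)^(8^(j+1)) - 2^(8^j)) * sl j = 7 * 8^j * Real.log 2 := by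
  rw [sl, mul_div_cancel₀ _ (dpos j).ne']

/-- `2^b - 2^a ≥ 2^b / 2` when `a < b` -/
lemma pow2_sub_ge {a b : ℕ} (h : a < b) : (2:ℝ)^b / 2 ≤ 2^b - 2^a := by
  obtain ⟨m, rfl⟩ := Nat.exists_eq_add_of_lt h
  have h1 : (2:ℝ)^a ≤ 2^(a+m) := pow_le_pow_right₀ (by norm_num) (by omega)
  have h2 : (2:ℝ)^(a+m+1) = 2^(a+m) * 2 := by rw [pow_succ]
  rw [h2]; linarith

lemma pow_pow_ge (j : ℕ) : j + 2 ≤ 2^(8^j) := by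
  have h1 : j < 8^j := Nat.lt_pow_self (by norm_num)
  have h2 : 8^j < 2^(8^j) := Nat.lt_pow_self (by norm_num)
  omega

lemma blk_eq {k j : ℕ} (h1 : 2^(8^j) ≤ k+1) (h2 : k+1 < 2^(8^(j+1))) : blk k = j := by
  have hjk : j + 1 ≤ k := by have := pow_pow_ge j; omega
  rw [blk, Nat.findGreatest_eq_iff]
  refine ⟨by omega, fun _ => h1, ?_⟩
  intro m hm hmk hP
  have : 2^(8^(j+1)) ≤ 2^(8^m) :=
    Nat.pow_le_pow_right (by norm_num) (Nat.pow_le_pow_right (by norm_num) hm)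
  omega

lemma blk_spec {n : ℕ} (hn : 1 ≤ n) :
    2^(8^(blk n)) ≤ n+1 ∧ n+1 < 2^(8^(blk n + 1)) := by
  have hP : 2^(8^(0:ℕ)) ≤ n+1 := by simpa using hn
  have h1 : 2^(8^(blk n)) ≤ n+1 :=
    Nat.findGreatest_spec (P := fun j => 2^(8^j) ≤ n+1) (Nat.zero_le n) hP
  refine ⟨h1, ?_⟩
  by_contra h
  push_neg at h
  have hle : blk n + 1 ≤ n := by have := pow_pow_ge (blk n + 1); omega
  exact Nat.findGreatest_is_greatest (P := fun j => 2^(8^j) ≤ n+1)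
    (Nat.lt_succ_self _) hle h

lemma blk_mono : Monotone blk := by
  intro a b hab
  exact Nat.findGreatest_mono (fun m hm => by omega) hab

lemma blk_breakpoint (j : ℕ) : blk (2^(8^j) - 1) = j := by
  have h0 : 1 ≤ 2^(8^j) := Nat.one_le_two_pow
  apply blk_eq
  · omega
  · have : 2^(8^j) < 2^(8^(j+1)) :=
      Nat.pow_lt_pow_right (by norm_num) (Nat.pow_lt_pow_right (by norm_num) (Nat.lt_succ_self j))
    omega

lemma cast_pow_pred (j : ℕ) : ((2^(8^j) - 1 : ℕ) : ℝ) = (2:ℝ)^(8^j) - 1 := by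
  have h0 : 1 ≤ 2^(8^j) := Nat.one_le_two_pow
  push_cast [h0]
  ring

lemma SS_succ (n : ℕ) : SS (n+1) = SS n + xx n := by
  rcases Nat.eq_zero_or_pos n with rfl | hn
  · have hb : blk 1 = 0 := blk_eq (by norm_num) (by norm_num)
    simp [SS, xx, hb]
    norm_num
  · obtain ⟨h1, h2⟩ := blk_spec hn
    set j := blk n with hj
    have hxn : xx n = sl j := by rw [xx, if_neg (by omega)]
    rcases Nat.lt_or_ge (n+2) (2^(8^(j+1))) with hc | hc
    · have hb : blk (n+1) = j := blk_eq (by omega) hc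
      rw [SS, SS, if_neg (by omega), if_neg (by omega), hb, ← hj, hxn]
      push_cast
      ring
    · have hc' : n + 2 = 2^(8^(j+1)) := by omega
      have hb : blk (n+1) = j + 1 := by
        apply blk_eq (by omega)
        have : 2^(8^(j+1)) < 2^(8^(j+1+1)) :=
          Nat.pow_lt_pow_right (by norm_num) (Nat.pow_lt_pow_right (by norm_num) (Nat.lt_succ_self _))
        omega
      have hcast : ((n:ℝ)) + 2 = (2:ℝ)^(8^(j+1)) := by
        have := congrArg (Nat.cast : ℕ → ℝ) hc'
        push_cast at this
        linarith
      rw [SS, SS, if_neg (by omega), if_neg (by omega), hb, ← hj, hxn]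
      have hzero : ((n:ℝ)+1) + 1 - 2^(8^(j+1)) = 0 := by push_cast; linarith
      have hkey : ((n:ℝ) + 1 - 2^(8^j)) * sl j + sl j = 7 * 8^j * Real.log 2 := by
        have : ((n:ℝ) + 1 - 2^(8^j)) + 1 = (2:ℝ)^(8^(j+1)) - 2^(8^j) := by linarith
        calc ((n:ℝ) + 1 - 2^(8^j)) * sl j + sl j
            = (((n:ℝ) + 1 - 2^(8^j)) + 1) * sl j := by ring
          _ = ((2:ℝ)^(8^(j+1)) - 2^(8^j)) * sl j := by rw [this]
          _ = 7 * 8^j * Real.log 2 := sl_mul j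
      have hterm : (((n:ℝ)+1) + 1 - 2^(8^(j+1))) * sl (j+1) = 0 := by rw [hzero]; ring
      push_cast
      push_cast at hterm hkey
      rw [pow_succ]
      linarith
  
lemma sum_xx (n : ℕ) : ∑ k ∈ Finset.range n, xx k = SS n := by
  induction n with
  | zero => simp [SS]
  | succ n ih => rw [Finset.sum_range_succ, ih, SS_succ]

lemma SS_breakpoint (j : ℕ) : SS (2^(8^j) - 1) = 8^j * Real.log 2 := by
  have h0 : 1 ≤ 2^(8^j) := Nat.one_le_two_pow
  have h2 : 2 ≤ 2^(8^j) := by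
    calc 2 = 2^(8^(0:ℕ)) := by norm_num
    _ ≤ 2^(8^j) := Nat.pow_le_pow_right (by norm_num) (Nat.pow_le_pow_right (by norm_num) (Nat.zero_le j))
  rw [SS, if_neg (by omega), blk_breakpoint, cast_pow_pred]
  ring


lemma eight_pow (j : ℕ) : (8:ℝ)^j = 2^(3*j) := by
  rw [pow_mul]; norm_num

lemma half_pow {c b : ℕ} (h : c + 1 ≤ b) : (2:ℝ)^c ≤ 2^b / 2 := by
  have h1 : (2:ℝ)^(c+1) ≤ 2^b := pow_le_pow_right₀ (by norm_num) h
  rw [pow_succ] at h1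
  linarith

lemma j_lt (j : ℕ) : j < 8^j := Nat.lt_pow_self (by norm_num)

lemma sl_le_log2 (j : ℕ) : sl j ≤ Real.log 2 := by
  rw [sl, div_le_iff₀ (dpos j)]
  have key : (7:ℝ)*8^j ≤ 2^(8^(j+1)) - 2^(8^j) := by
    calc (7:ℝ)*8^j ≤ 2^(3*j+3) := by
          rw [pow_add, ← eight_pow]
          nlinarith [pow_pos (by norm_num : (0:ℝ) < 8) j]
      _ ≤ 2^(8^(j+1))/2 := half_pow (by
          have h1 := j_lt j
          have h2 : 8^(j+1) = 8 * 8^j := by rw [pow_succ]; ring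
          omega)
      _ ≤ _ := pow2_sub_ge (Nat.pow_lt_pow_right (by norm_num) (Nat.lt_succ_self j))
  nlinarith [log2_pos]

lemma sl_anti : Antitone sl := by
  apply antitone_nat_of_succ_le
  intro j
  rw [sl, sl, div_le_div_iff₀ (dpos (j+1)) (dpos j)]
  have key : (8:ℝ) * (2^(8^(j+1)) - 2^(8^j)) ≤ 2^(8^(j+2)) - 2^(8^(j+1)) := by
    have h1 : (8:ℝ) * (2^(8^(j+1)) - 2^(8^j)) ≤ 2^(8^(j+1)+3) := by
      have hp : (0:ℝ) < 2^(8^j) := pow_pos (by norm_num) _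
      have he : (2:ℝ)^(8^(j+1)+3) = 2^(8^(j+1)) * 8 := by rw [pow_add]; norm_num
      rw [he]
      linarith
    have h2 : (2:ℝ)^(8^(j+1)+3) ≤ 2^(8^(j+2))/2 := half_pow (by
      have h3 : 8^(j+2) = 8 * 8^(j+1) := by rw [pow_succ (8:ℕ) (j+1)]; ring
      have h4 : 1 ≤ 8^(j+1) := Nat.one_le_pow _ _ (by norm_num)
      omega)
    have h3 : (2:ℝ)^(8^(j+2))/2 ≤ 2^(8^(j+2)) - 2^(8^(j+1)) :=
      pow2_sub_ge (Nat.pow_lt_pow_right (by norm_num) (Nat.lt_succ_self _))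
    linarith
  have hL := log2_pos
  have hp8 : (0:ℝ) < (8:ℝ)^j := pow_pos (by norm_num) _
  have hd := dpos j
  calc 7*8^(j+1)*Real.log 2 * (2^(8^(j+1)) - 2^(8^j))
      = 7*8^j*Real.log 2 * (8 * (2^(8^(j+1)) - 2^(8^j))) := by rw [pow_succ]; ring
    _ ≤ 7*8^j*Real.log 2 * (2^(8^(j+2)) - 2^(8^(j+1))) := by
        apply mul_le_mul_of_nonneg_left key
        positivity

lemma sl_le14 (j : ℕ) : sl j ≤ 14 * Real.log 2 / 2^j := by
  rw [sl, div_le_div_iff₀ (dpos j) (pow_pos (by norm_num : (0:ℝ) < 2) j)]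
  have h84 : (8:ℝ)^j * 2^j = 2^(4*j) := by
    rw [eight_pow, ← pow_add]
    congr 1
    omega
  have h1 : (2:ℝ)^(4*j) ≤ 2^(8^(j+1)) - 2^(8^j) := by
    calc (2:ℝ)^(4*j) ≤ 2^(8^(j+1))/2 := half_pow (by
          have h2 := j_lt j
          have h3 : 8^(j+1) = 8 * 8^j := by rw [pow_succ]; ring
          omega)
      _ ≤ _ := pow2_sub_ge (Nat.pow_lt_pow_right (by norm_num) (Nat.lt_succ_self j))
  nlinarith [log2_pos, pow_pos (by norm_num : (0:ℝ) < 2) (4*j),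
    pow_pos (by norm_num : (0:ℝ) < 8) j, pow_pos (by norm_num : (0:ℝ) < 2) j]

lemma mid_bound (j : ℕ) :
    ((2:ℝ)^(4*8^j) - 2^(8^j)) * sl j ≤ 8^j * Real.log 2 := by
  rw [sl, mul_div_assoc', div_le_iff₀ (dpos j)]
  have ht : 1 ≤ 8^j := Nat.one_le_pow _ _ (by norm_num)
  have he : 8^(j+1) = 8 * 8^j := by rw [pow_succ]; ring
  have hkey : (7:ℝ) * (2^(4*8^j) - 2^(8^j)) ≤ 2^(8^(j+1)) - 2^(8^j) := by
    have hp : (0:ℝ) < 2^(8^j) := pow_pos (by norm_num) _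
    have c1 : (7:ℝ) * 2^(4*8^j) ≤ 2^(4*8^j+3) := by
      have := pow_pos (by norm_num : (0:ℝ) < 2) (4*8^j)
      rw [pow_add]
      nlinarith
    have c2 : (2:ℝ)^(4*8^j+3) ≤ 2^(8^(j+1))/2 := half_pow (by omega)
    have c3 : (2:ℝ)^(8^(j+1))/2 ≤ 2^(8^(j+1)) - 2^(8^j) :=
      pow2_sub_ge (by omega)
    linarith
  have h2 : ((2:ℝ)^(4*8^j) - 2^(8^j)) * (7*8^j*Real.log 2)
      = (8^j*Real.log 2) * (7*((2:ℝ)^(4*8^j) - 2^(8^j))) := by ring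
  rw [h2]
  exact mul_le_mul_of_nonneg_left hkey (by positivity)

lemma xx_nonneg (n : ℕ) : 0 ≤ xx n := by
  rw [xx]
  split
  · exact log2_pos.le
  · exact sl_nonneg _

lemma xx_anti : Antitone xx := by
  intro a b hab
  rcases Nat.eq_zero_or_pos a with rfl | ha
  · rcases Nat.eq_zero_or_pos b with rfl | hb
    · exact le_refl _
    · rw [xx, xx, if_pos rfl, if_neg (by omega)]
      exact sl_le_log2 _
  · have hb : 1 ≤ b := le_trans ha hab
    rw [xx, xx, if_neg (by omega), if_neg (by omega)]
    exact sl_anti (blk_mono hab)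

lemma xx_tendsto : Filter.Tendsto xx Filter.atTop (nhds 0) := by
  rw [Metric.tendsto_atTop]
  intro ε hε
  obtain ⟨j, hj⟩ := pow_unbounded_of_one_lt (14 * Real.log 2 / ε) (by norm_num : (1:ℝ) < 2)
  refine ⟨2^(8^j) - 1, fun n hn => ?_⟩
  have h1 : xx n ≤ sl j := by
    have h := xx_anti hn
    have hx : xx (2^(8^j) - 1) = sl j := by
      rw [xx, if_neg (by have := pow_pow_ge j; omega), blk_breakpoint]
    rwa [hx] at h
  have h3 : 14*Real.log 2/2^j < ε := by
    rw [div_lt_iff₀ (pow_pos (by norm_num : (0:ℝ) < 2) j)]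
    rw [div_lt_iff₀ hε] at hj
    linarith
  have h0 : 0 ≤ xx n := xx_nonneg n
  have h2 := sl_le14 j
  simp only [Real.dist_eq, sub_zero, abs_of_nonneg h0]
  linarith

lemma log_ge {n : ℕ} {m : ℕ} (h : 2^m ≤ n+1) : (m:ℝ) * Real.log 2 ≤ Real.log (n+1) := by
  have hc : (2:ℝ)^m ≤ (n:ℝ)+1 := by
    have := (Nat.cast_le (α := ℝ)).mpr h
    push_cast at this
    linarith
  calc (m:ℝ) * Real.log 2 = Real.log ((2:ℝ)^m) := (Real.log_pow (n := m) (x := 2)).symm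
    _ ≤ Real.log ((n:ℝ)+1) := Real.log_le_log (by positivity) hc

lemma log_np1_pos {n : ℕ} (hn : 1 ≤ n) : 0 < Real.log ((n:ℝ)+1) := by
  apply Real.log_pos
  have : (1:ℝ) ≤ (n:ℝ) := by exact_mod_cast hn
  linarith

lemma SS_le2 {n : ℕ} (hn : 1 ≤ n) : SS n ≤ 2 * Real.log ((n:ℝ)+1) := by
  obtain ⟨h1, h2⟩ := blk_spec hn
  set j := blk n with hj
  have hSS : SS n = 8^j * Real.log 2 + ((n:ℝ) + 1 - 2^(8^j)) * sl j := by
    rw [SS, if_neg (by omega)]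
  have hcast : ((8^j:ℕ):ℝ) = (8:ℝ)^j := by push_cast; ring
  have hlog1 : (8:ℝ)^j * Real.log 2 ≤ Real.log ((n:ℝ)+1) := by
    have := log_ge h1
    rwa [hcast] at this
  have hnc : (n:ℝ) + 1 ≤ 2^(8^(j+1)) := by
    have := (Nat.cast_le (α := ℝ)).mpr h2.le
    push_cast at this
    linarith
  rcases le_or_gt (n+1) (2^(4*8^j)) with hc | hc
  · -- first half of the block
    have hnc4 : (n:ℝ) + 1 ≤ 2^(4*8^j) := by
      have := (Nat.cast_le (α := ℝ)).mpr hc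
      push_cast at this
      linarith
    have hb1 : ((n:ℝ) + 1 - 2^(8^j)) * sl j ≤ ((2:ℝ)^(4*8^j) - 2^(8^j)) * sl j :=
      mul_le_mul_of_nonneg_right (by linarith) (sl_nonneg j)
    have hb2 := mid_bound j
    rw [hSS]
    linarith
  · -- second half: the logarithm is already large
    have hlog4 : (4:ℝ) * 8^j * Real.log 2 ≤ Real.log ((n:ℝ)+1) := by
      have := log_ge (n := n) (m := 4*8^j) (by omega)
      rw [show ((4*8^j:ℕ):ℝ) = 4 * (8:ℝ)^j by push_cast; ring] at this
      linarith
    have hb1 : ((n:ℝ) + 1 - 2^(8^j)) * sl j ≤ ((2:ℝ)^(8^(j+1)) - 2^(8^j)) * sl j :=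
      mul_le_mul_of_nonneg_right (by linarith) (sl_nonneg j)
    rw [hSS]
    have := sl_mul j
    nlinarith [log2_pos, pow_pos (by norm_num : (0:ℝ) < 8) j]

lemma ratio_one (j : ℕ) :
    SS (2^(8^j) - 1) / Real.log ((2^(8^j) - 1 : ℕ) + 1) = 1 := by
  have hcast : ((2^(8^j) - 1 : ℕ):ℝ) + 1 = (2:ℝ)^(8^j) := by
    rw [cast_pow_pred]; ring
  rw [SS_breakpoint, hcast, Real.log_pow]
  have hc : ((8^j:ℕ):ℝ) * Real.log 2 = (8:ℝ)^j * Real.log 2 := by push_cast; ring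
  rw [hc, div_self]
  positivity

lemma ratio_half (j : ℕ) :
    SS (2^(4*8^j) - 1) / Real.log ((2^(4*8^j) - 1 : ℕ) + 1) ≤ 1/2 := by
  have ht : 1 ≤ 8^j := Nat.one_le_pow _ _ (by norm_num)
  have he : 8^(j+1) = 8 * 8^j := by rw [pow_succ]; ring
  have h0 : 1 ≤ 2^(4*8^j) := Nat.one_le_two_pow
  have hb : blk (2^(4*8^j) - 1) = j := by
    apply blk_eq
    · have : (2:ℕ)^(8^j) ≤ 2^(4*8^j) := Nat.pow_le_pow_right (by norm_num) (by omega)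
      omega
    · have : (2:ℕ)^(4*8^j) < 2^(8^(j+1)) := Nat.pow_lt_pow_right (by norm_num) (by omega)
      omega
  have hcast : ((2^(4*8^j) - 1 : ℕ):ℝ) + 1 = (2:ℝ)^(4*8^j) := by
    push_cast [h0]; ring
  have h2' : 2 ≤ 2^(4*8^j) := Nat.one_lt_two_pow_iff.mpr (by omega)
  have hSS : SS (2^(4*8^j) - 1)
      = 8^j * Real.log 2 + ((2:ℝ)^(4*8^j) - 2^(8^j)) * sl j := by
    rw [SS, if_neg (by omega), hb, hcast]
  have hlogv : Real.log (((2^(4*8^j) - 1 : ℕ):ℝ) + 1) = (4*8^j : ℕ) * Real.log 2 := by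
    rw [hcast, Real.log_pow]
  rw [hSS, hlogv, div_le_iff₀ (by positivity)]
  have hmid := mid_bound j
  have hc : ((4*8^j : ℕ):ℝ) = 4 * (8:ℝ)^j := by push_cast; ring
  rw [hc]
  nlinarith [log2_pos]

lemma dstar_eq_self {x : ℕ → ℝ} (hx : Antitone x) (hx0 : ∀ n, 0 ≤ x n) (n : ℕ) :
    dstar x n = x n := by
  have habs : ∀ k, |x k| = x k := fun k => abs_of_nonneg (hx0 k)
  have hne : ∀ J : Finset ℕ, {b : ℝ | ∃ k, k ∉ J ∧ b = |x k|}.Nonempty := by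
    intro J
    obtain ⟨k, hk⟩ := Set.Infinite.exists_notMem_finset (Set.infinite_univ (α := ℕ)) J
    exact ⟨|x k|, k, hk.2, rfl⟩
  have hbdd : ∀ J : Finset ℕ, BddAbove {b : ℝ | ∃ k, k ∉ J ∧ b = |x k|} := by
    intro J
    refine ⟨x 0, fun b hb => ?_⟩
    obtain ⟨k, _, rfl⟩ := hb
    rw [habs]; exact hx (Nat.zero_le k)
  have hmem : x n ∈ {a : ℝ | ∃ J : Finset ℕ, J.card ≤ n ∧
      a = sSup {b : ℝ | ∃ k, k ∉ J ∧ b = |x k|}} := by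
    refine ⟨Finset.range n, by simp, ?_⟩
    refine le_antisymm ?_ ?_
    · exact le_csSup (hbdd _) ⟨n, by simp, (habs n).symm⟩
    · refine csSup_le (hne _) ?_
      rintro b ⟨k, hk, rfl⟩
      rw [habs]
      exact hx (by simpa using hk)
  have hlb : ∀ a ∈ {a : ℝ | ∃ J : Finset ℕ, J.card ≤ n ∧
      a = sSup {b : ℝ | ∃ k, k ∉ J ∧ b = |x k|}}, x n ≤ a := by
    rintro a ⟨J, hJ, rfl⟩
    have : ∃ k, k ≤ n ∧ k ∉ J := by
      by_contra h
      push_neg at h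
      have hsub : Finset.range (n+1) ⊆ J := by
        intro k hk
        exact h k (Nat.lt_succ_iff.mp (Finset.mem_range.mp hk))
      have := Finset.card_le_card hsub
      simp at this; omega
    obtain ⟨k, hkn, hkJ⟩ := this
    calc x n ≤ x k := hx hkn
      _ = |x k| := (habs k).symm
      _ ≤ _ := le_csSup (hbdd _) ⟨k, hkJ, rfl⟩
  exact le_antisymm (csInf_le ⟨x n, hlb⟩ hmem) (le_csInf ⟨_, hmem⟩ hlb)

open Filter


/-- In the Marcinkiewicz space with `Ψ(n) = log (n+1)` there is a nonnegative null
sequence `x` whose sequence of ratios `(∑_{k=1}^n x*_k) / log (n+1)` is bounded by `2`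
but does not converge: it equals `1` infinitely often and is `≤ 1/2` infinitely often. -/
theorem marcinkiewicz_ratios_need_not_converge :
    ∃ x : ℕ → ℝ, (∀ n, 0 ≤ x n) ∧ Tendsto x atTop (nhds 0) ∧
      (∀ n : ℕ, 1 ≤ n →
        (∑ k ∈ Finset.range n, dstar x k) / Real.log (n + 1) ≤ 2) ∧
      (∀ N : ℕ, ∃ n ≥ N, 1 ≤ n ∧
        (∑ k ∈ Finset.range n, dstar x k) / Real.log (n + 1) = 1) ∧
      (∀ N : ℕ, ∃ n ≥ N, 1 ≤ n ∧
        (∑ k ∈ Finset.range n, dstar x k) / Real.log (n + 1) ≤ 1 / 2) ∧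
      ¬ ∃ l : ℝ, Tendsto
        (fun n : ℕ => (∑ k ∈ Finset.range n, dstar x k) / Real.log (n + 1))
        atTop (nhds l) := by

  have hsum : ∀ n, ∑ k ∈ Finset.range n, dstar xx k = SS n := fun n => by
    rw [Finset.sum_congr rfl (fun k _ => dstar_eq_self xx_anti xx_nonneg k), sum_xx]
  have hSSnn : ∀ n, 0 ≤ SS n := fun n => by
    rw [← sum_xx]; exact Finset.sum_nonneg (fun k _ => xx_nonneg k)
  have hone : ∀ N : ℕ, ∃ n ≥ N, 1 ≤ n ∧
      (∑ k ∈ Finset.range n, dstar xx k) / Real.log (n + 1) = 1 := by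
    intro N
    refine ⟨2^(8^N) - 1, by have := pow_pow_ge N; omega, by have := pow_pow_ge N; omega, ?_⟩
    rw [hsum]
    exact ratio_one N
  have hhalf : ∀ N : ℕ, ∃ n ≥ N, 1 ≤ n ∧
      (∑ k ∈ Finset.range n, dstar xx k) / Real.log (n + 1) ≤ 1/2 := by
    intro N
    have hp1 := pow_pow_ge N
    have hp2 : (2:ℕ)^(8^N) ≤ 2^(4*8^N) :=
      Nat.pow_le_pow_right (by norm_num) (by have := Nat.one_le_pow N 8 (by norm_num); omega)
    refine ⟨2^(4*8^N) - 1, by omega, by omega, ?_⟩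
    rw [hsum]
    exact ratio_half N
  refine ⟨xx, xx_nonneg, xx_tendsto, ?_, hone, hhalf, ?_⟩
  · intro n hn
    rw [hsum, div_le_iff₀ (log_np1_pos hn)]
    have := SS_le2 hn
    linarith
  · rintro ⟨l, hl⟩
    rw [Metric.tendsto_atTop] at hl
    obtain ⟨K, hK⟩ := hl (1/8) (by norm_num)
    obtain ⟨n1, hn1K, hn11, he1⟩ := hone K
    obtain ⟨n2, hn2K, hn21, he2⟩ := hhalf K
    have d1 := hK n1 hn1K
    have d2 := hK n2 hn2K
    simp only [Real.dist_eq] at d1 d2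
    rw [he1] at d1
    have hr2 : 0 ≤ (∑ k ∈ Finset.range n2, dstar xx k) / Real.log (n2 + 1) := by
      rw [hsum]
      exact div_nonneg (hSSnn n2) (log_np1_pos hn21).le
    rw [abs_lt] at d1 d2
    linarith [d1.2, d2.1, he2]
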